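/- Let X and Y be T_D topological spaces (every singleton is locally closed). Then there exists a homeomorphism f : X → Y if and only if there exists a lattice isomorphism f′ : Open(X) → Open(Y); moreover, the correspondence is compatible in the sense that the lattice isomorphism induced by a homeomorphism f is given by f′(U) = f(U) for every open U ⊆ X. -/

import Mathlib

open TopologicalSpace

namespace Statement10Aux

variable {X Y : Type*} [TopologicalSpace X] [TopologicalSpace Y]

/-- T_D condition in a convenient form. -/
def TD (X : Type*) [TopologicalSpace X] : Prop :=
  ∀ x : X, IsClosed (closure {x} \ {x})

lemma td_of (hX : ∀ x : X, ∃ U C : Set X, IsOpen U ∧ IsClosed C ∧ {x} = U ∩ C) : TD X := by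
  intro x
  obtain ⟨U, C, hU, hC, hx⟩ := hX x
  have hxU : x ∈ U := by
    have : x ∈ U ∩ C := by rw [← hx]; exact rfl
    exact this.1
  have hsub : closure {x} ⊆ C :=
    closure_minimal (by rw [hx]; exact Set.inter_subset_right) hC
  have heq : closure {x} \ {x} = closure {x} ∩ Uᶜ := by
    ext z
    constructor
    · rintro ⟨hz, hz2⟩
      refine ⟨hz, fun hzU => hz2 ?_⟩
      have : z ∈ U ∩ C := ⟨hzU, hsub hz⟩
      rw [← hx] at this; exact this
    · rintro ⟨hz, hz2⟩
      refine ⟨hz, fun h => hz2 ?_⟩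
      rw [Set.mem_singleton_iff] at h
      rw [h]; exact hxU
  rw [heq]
  exact isClosed_closure.inter hU.isClosed_compl

/-- The complement of the closure of a point, as an open set. -/
def ppV (x : X) : Opens X := ⟨(closure {x})ᶜ, isClosed_closure.isOpen_compl⟩

/-- The complement of `closure {x} \ {x}`, open in a T_D space. -/
def ppW (hT : TD X) (x : X) : Opens X := ⟨(closure {x} \ {x})ᶜ, (hT x).isOpen_compl⟩

lemma mem_ppW_diff (hT : TD X) (x : X) :
    x ∈ (ppW hT x : Set X) \ (ppV x : Set X) := by
  constructor
  · intro h; exact h.2 rfl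
  · intro h; exact h (subset_closure rfl)

lemma ppW_diff_eq (hT : TD X) (x : X) :
    (ppW hT x : Set X) \ (ppV x : Set X) = {x} := by
  ext z
  constructor
  · rintro ⟨hz1, hz2⟩
    have hzc : z ∈ closure {x} := by
      by_contra h; exact hz2 h
    by_contra hne
    exact hz1 ⟨hzc, fun h => hne h⟩
  · rintro rfl; exact mem_ppW_diff hT z

/-- A "point pair" of open sets. -/
def IsPP (V W : Opens X) : Prop :=
  ¬ W ≤ V ∧ ∀ U : Opens X, U ≤ V ∨ W ≤ U ⊔ V

lemma mem_sup' {U V : Opens X} {x : X} : x ∈ U ⊔ V ↔ x ∈ (U : Set X) ∨ x ∈ (V : Set X) := by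
  rw [← SetLike.mem_coe, Opens.coe_sup]; exact Set.mem_union x _ _

lemma isPP_pp (hT : TD X) (x : X) : IsPP (ppV x) (ppW hT x) := by
  constructor
  · intro hle
    exact (mem_ppW_diff hT x).2 (hle (mem_ppW_diff hT x).1)
  · intro U
    by_cases hU : U ≤ ppV x
    · exact Or.inl hU
    · right
      obtain ⟨z, hzU, hz⟩ : ∃ z, z ∈ U ∧ z ∉ (ppV x : Set X) := by
        by_contra h
        push_neg at h
        exact hU fun w hw => h w hw
      have hzc : z ∈ closure {x} := by
        by_contra h; exact hz h
      have hxU : x ∈ U := by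
        rcases mem_closure_iff.mp hzc U U.2 hzU with ⟨w, hw1, hw2⟩
        rw [Set.mem_singleton_iff] at hw2
        rwa [← hw2]
      intro w hw
      rcases Classical.em (w ∈ closure {x}) with hwc | hwc
      · have : w = x := by
          by_contra hne
          exact hw ⟨hwc, fun h => hne h⟩
        simp only [← SetLike.mem_coe, Opens.coe_sup, Set.mem_union]
        exact Or.inl (by rw [this]; exact hxU)
      · simp only [← SetLike.mem_coe, Opens.coe_sup, Set.mem_union]
        exact Or.inr hwc

lemma IsPP.nonempty {V W : Opens X} (h : IsPP V W) :
    ((W : Set X) \ (V : Set X)).Nonempty := by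
  rcases Set.not_subset.mp (fun hs => h.1 fun a ha => hs ha) with ⟨z, hz1, hz2⟩
  exact ⟨z, hz1, hz2⟩

lemma IsPP.diff_subsingleton (hT : TD X) {V W : Opens X} (h : IsPP V W) :
    ((W : Set X) \ (V : Set X)).Subsingleton := by
  have aux : ∀ a b : X, a ∈ (W : Set X) \ V → b ∈ (W : Set X) \ V → a ≠ b →
      a ∉ closure {b} := by
    intro a b ha hb hne hcl
    set U : Opens X := W ⊓ ⟨(closure {b} \ {b})ᶜ, (hT b).isOpen_compl⟩ with hUdef
    have hbU : b ∈ U := ⟨hb.1, fun hbm => hbm.2 rfl⟩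
    have hnle : ¬ U ≤ V := fun hle => hb.2 (hle hbU)
    have hWle : W ≤ U ⊔ V := (h.2 U).resolve_left hnle
    have haUV := hWle ha.1
    simp only [← SetLike.mem_coe, Opens.coe_sup, Set.mem_union] at haUV
    rcases haUV with haU | haV
    · exact haU.2 ⟨hcl, fun hh => hne hh⟩
    · exact ha.2 haV
  intro a ha b hb
  by_contra hne
  have hab : a ∉ closure {b} := aux a b ha hb hne
  have hba : b ∉ closure {a} := aux b a hb ha (fun h' => hne h'.symm)
  set U : Opens X := W ⊓ ppV a with hUdef
  have hbU : b ∈ U := ⟨hb.1, hba⟩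
  have hnle : ¬ U ≤ V := fun hle => hb.2 (hle hbU)
  have hWle : W ≤ U ⊔ V := (h.2 U).resolve_left hnle
  have haUV := hWle ha.1
  simp only [← SetLike.mem_coe, Opens.coe_sup, Set.mem_union] at haUV
  rcases haUV with haU | haV
  · exact haU.2 (subset_closure rfl)
  · exact ha.2 haV

/-- The point associated with a point pair. -/
noncomputable def IsPP.pt {V W : Opens X} (h : IsPP V W) : X := h.nonempty.choose

lemma IsPP.pt_mem {V W : Opens X} (h : IsPP V W) :
    h.pt ∈ (W : Set X) \ (V : Set X) := h.nonempty.choose_spec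

lemma IsPP.map {V W : Opens X} (e : Opens X ≃o Opens Y) (h : IsPP V W) :
    IsPP (e V) (e W) := by
  constructor
  · intro hle
    exact h.1 (e.le_iff_le.mp hle)
  · intro U
    rcases h.2 (e.symm U) with h' | h'
    · left
      have := e.le_iff_le.mpr h'
      rwa [e.apply_symm_apply] at this
    · right
      have := e.le_iff_le.mpr h'
      rwa [e.map_sup, e.apply_symm_apply] at this

lemma pt_eq_of_le (hT : TD X) {V W V' W' : Opens X} (h : IsPP V W) (h' : IsPP V' W')
    (h1 : V ≤ V') (h2 : W' ≤ W) : h'.pt = h.pt := by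
  refine h.diff_subsingleton hT ⟨h2 h'.pt_mem.1, fun hv => h'.pt_mem.2 (h1 hv)⟩ h.pt_mem

lemma IsPP.combine {V W V' W' : Opens X} (h : IsPP V W) (h' : IsPP V' W')
    {x : X} (hx : x ∈ (W : Set X) \ V) (hx' : x ∈ (W' : Set X) \ V') :
    IsPP (V ⊔ V') (W ⊓ W') := by
  constructor
  · intro hle
    have : x ∈ (W ⊓ W' : Opens X) := ⟨hx.1, hx'.1⟩
    have := hle this
    simp only [← SetLike.mem_coe, Opens.coe_sup, Set.mem_union] at this
    rcases this with h1 | h1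
    · exact hx.2 h1
    · exact hx'.2 h1
  · intro U
    rcases h.2 U with hU | hU
    · rcases h'.2 U with hU' | hU'
      · exact Or.inl (le_sup_of_le_left hU)
      · exact Or.inr (inf_le_right.trans (hU'.trans (sup_le_sup_left le_sup_right U)))
    · exact Or.inr (inf_le_left.trans (hU.trans (sup_le_sup_left le_sup_left U)))


/-- The map induced by an order isomorphism of open-set lattices. -/
noncomputable def F (hTX : TD X) (e : Opens X ≃o Opens Y) (x : X) : Y :=
  ((isPP_pp hTX x).map e).pt

lemma mem_e (hTX : TD X) (e : Opens X ≃o Opens Y) (x : X) (U : Opens X) (hx : x ∈ U) :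
    F hTX e x ∈ e U := by
  have hnle : ¬ U ≤ ppV x := fun hle => (mem_ppW_diff hTX x).2 (hle hx)
  have hWle : ppW hTX x ≤ U ⊔ ppV x := ((isPP_pp hTX x).2 U).resolve_left hnle
  have he : e (ppW hTX x) ≤ e U ⊔ e (ppV x) := by
    have := e.le_iff_le.mpr hWle
    rwa [e.map_sup] at this
  have hm := ((isPP_pp hTX x).map e).pt_mem
  have := he hm.1
  simp only [← SetLike.mem_coe, Opens.coe_sup, Set.mem_union] at this
  rcases this with h1 | h1
  · exact h1
  · exact absurd h1 hm.2

lemma GF (hTX : TD X) (hTY : TD Y) (e : Opens X ≃o Opens Y) (x : X) :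
    F hTY e.symm (F hTX e x) = x := by
  set y := F hTX e x with hy
  have hy1 : y ∈ (e (ppW hTX x) : Set Y) \ (e (ppV x) : Set Y) :=
    ((isPP_pp hTX x).map e).pt_mem
  have hy2 : y ∈ (ppW hTY y : Set Y) \ (ppV y : Set Y) := mem_ppW_diff hTY y
  have hQ : IsPP (ppV y ⊔ e (ppV x)) (ppW hTY y ⊓ e (ppW hTX x)) :=
    (isPP_pp hTY y).combine ((isPP_pp hTX x).map e) hy2 hy1
  have h1 : (hQ.map e.symm).pt = (((isPP_pp hTY y).map e.symm)).pt :=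
    pt_eq_of_le hTX ((isPP_pp hTY y).map e.symm) (hQ.map e.symm)
      (e.symm.monotone le_sup_left) (e.symm.monotone inf_le_left)
  have h2 : (hQ.map e.symm).pt = ((((isPP_pp hTX x).map e).map e.symm)).pt :=
    pt_eq_of_le hTX (((isPP_pp hTX x).map e).map e.symm) (hQ.map e.symm)
      (e.symm.monotone le_sup_right) (e.symm.monotone inf_le_right)
  have h3 : ((((isPP_pp hTX x).map e).map e.symm)).pt = x := by
    have hmem := ((((isPP_pp hTX x).map e).map e.symm)).pt_mem
    have hW' : (e.symm (e (ppW hTX x)) : Set X) = (ppW hTX x : Set X) := by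
      rw [e.symm_apply_apply]
    have hV' : (e.symm (e (ppV x)) : Set X) = (ppV x : Set X) := by
      rw [e.symm_apply_apply]
    exact (isPP_pp hTX x).diff_subsingleton hTX
      ⟨hW' ▸ hmem.1, fun hv => hmem.2 (hV'.symm ▸ hv)⟩ (mem_ppW_diff hTX x)
  show (((isPP_pp hTY y).map e.symm)).pt = x
  rw [← h1, h2, h3]

lemma key (hTX : TD X) (hTY : TD Y) (e : Opens X ≃o Opens Y) (x : X) (U : Opens X) :
    F hTX e x ∈ e U ↔ x ∈ U := by
  constructor
  · intro h
    have := mem_e hTY e.symm (F hTX e x) (e U) h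
    rw [GF hTX hTY e x, e.symm_apply_apply] at this
    exact this
  · exact mem_e hTX e x U

/-- The homeomorphism induced by a lattice isomorphism between T_D spaces. -/
noncomputable def homeoOf (hTX : TD X) (hTY : TD Y) (e : Opens X ≃o Opens Y) : X ≃ₜ Y where
  toFun := F hTX e
  invFun := F hTY e.symm
  left_inv := GF hTX hTY e
  right_inv := fun y => by
    have := GF hTY hTX e.symm y
    rwa [OrderIso.symm_symm] at this
  continuous_toFun := by
    rw [continuous_def]
    intro S hS
    have h : F hTX e ⁻¹' S = (e.symm ⟨S, hS⟩ : Set X) := by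
      ext x
      have h1 : F hTX e x ∈ e (e.symm ⟨S, hS⟩) ↔ x ∈ e.symm ⟨S, hS⟩ :=
        key hTX hTY e x (e.symm ⟨S, hS⟩)
      rw [e.apply_symm_apply] at h1
      exact h1
    rw [h]
    exact (e.symm ⟨S, hS⟩).2
  continuous_invFun := by
    rw [continuous_def]
    intro S hS
    have h : F hTY e.symm ⁻¹' S = (e.symm.symm ⟨S, hS⟩ : Set Y) := by
      ext y
      have h1 : F hTY e.symm y ∈ e.symm (e.symm.symm ⟨S, hS⟩) ↔ y ∈ e.symm.symm ⟨S, hS⟩ :=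
        key hTY hTX e.symm y (e.symm.symm ⟨S, hS⟩)
      rw [e.symm.apply_symm_apply] at h1
      exact h1
    rw [h]
    exact (e.symm.symm ⟨S, hS⟩).2

end Statement10Aux

open TopologicalSpace in
/-- **Thron.** Let `X` and `Y` be `T_D` topological spaces (every singleton is
locally closed).  Then there is a homeomorphism `X ≃ₜ Y` if and only if there is a lattice
(order) isomorphism `Open(X) ≃o Open(Y)`; moreover the lattice isomorphism induced by a
homeomorphism `f` is given by `U ↦ f(U)`. -/
theorem statement10 {X Y : Type*} [TopologicalSpace X] [TopologicalSpace Y]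
    (hX : ∀ x : X, ∃ U C : Set X, IsOpen U ∧ IsClosed C ∧ {x} = U ∩ C)
    (hY : ∀ y : Y, ∃ U C : Set Y, IsOpen U ∧ IsClosed C ∧ {y} = U ∩ C) :
    (Nonempty (X ≃ₜ Y) ↔ Nonempty (Opens X ≃o Opens Y)) ∧
    (∀ f : X ≃ₜ Y, ∃ e : Opens X ≃o Opens Y,
      ∀ U : Opens X, (e U : Set Y) = f '' (U : Set X)) := by
  have hTX := Statement10Aux.td_of hX
  have hTY := Statement10Aux.td_of hY
  constructor
  · constructor
    · rintro ⟨f⟩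
      exact ⟨f.opensCongr⟩
    · rintro ⟨e⟩
      exact ⟨Statement10Aux.homeoOf hTX hTY e⟩
  · intro f
    refine ⟨f.opensCongr, fun U => ?_⟩
    show (Opens.comap (f.symm : C(Y, X)) U : Set Y) = f '' (U : Set X)
    rw [Opens.coe_comap]
    exact (f.toEquiv.image_eq_preimage_symm _).symm
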